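/- Let d ≥ 12 and let (d; m_1, ..., m_r) be integers satisfying the Noether equalities, with all m_i ≥ 0 and m_i ≤ d - 1 for all i, and suppose B(d; m) holds (Bézout: m_i + m_j ≤ d for all i ≠ j). If m_1 ≥ m_2 ≥ ... ≥ m_r, and m_1 + m_2 = d with m_2 = m_3 = d - m_1 and m_1 > d/2, then r > γ + 1 where γ is the number of indices i ≥ 2 with m_i = d - m_1; equivalently, if r = γ + 1 then m_1(d - 2m_1) = (d-1)(2d - 3m_1 - 1), which is impossible for m_1 < d - 1. -/

import Mathlib

/-- Key step of Lemma `Lem:MultiplicitiesDminus1`: let `d ≥ 12` and let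
`(d; m_1, ..., m_r)` (here indexed from `0`) satisfy the Noether equalities, with all
`m_i ≥ 0`, `m_i ≤ d - 1`, Bézout (`m_i + m_j ≤ d` for `i ≠ j`), sorted decreasingly,
`m_1 + m_2 = d`, `m_3 = d - m_1` and `m_1 > d/2`. Then: if all multiplicities after
the first equal `d - m_1` (i.e. `r = γ + 1`), the equation
`m_1(d - 2m_1) = (d-1)(2d - 3m_1 - 1)` holds; and this being impossible for
`m_1 < d - 1`, there is a further base-point, i.e. some index `i ≥ 2` (1-based)
with `m_i ≠ d - m_1`. -/
theorem extra_basepoint (d : ℤ) (hd : 12 ≤ d) (r : ℕ) (hr : 3 ≤ r) (m : ℕ → ℤ)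
    (h1 : ∑ i ∈ Finset.range r, m i = 3 * (d - 1))
    (h2 : ∑ i ∈ Finset.range r, (m i) ^ 2 = d ^ 2 - 1)
    (hnonneg : ∀ i < r, 0 ≤ m i)
    (hle : ∀ i < r, m i ≤ d - 1)
    (hbezout : ∀ i < r, ∀ j < r, i ≠ j → m i + m j ≤ d)
    (hmono : ∀ i j : ℕ, i ≤ j → j < r → m j ≤ m i)
    (hsum : m 0 + m 1 = d)
    (hm2 : m 2 = d - m 0)
    (hbig : d < 2 * m 0) :
    ((∀ i, 1 ≤ i → i < r → m i = d - m 0) →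
        m 0 * (d - 2 * m 0) = (d - 1) * (2 * d - 3 * m 0 - 1)) ∧
    (m 0 < d - 1 → ∃ i, 1 ≤ i ∧ i < r ∧ m i ≠ d - m 0) := by

  obtain ⟨k, rfl⟩ : ∃ k, r = k + 1 := ⟨r - 1, by omega⟩
  have key : (∀ i, 1 ≤ i → i < k + 1 → m i = d - m 0) →
      m 0 * (d - 2 * m 0) = (d - 1) * (2 * d - 3 * m 0 - 1) := by
    intro hall
    rw [Finset.sum_range_succ'] at h1 h2
    have e1 : ∑ i ∈ Finset.range k, m (i + 1) = (k : ℤ) * (d - m 0) := by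
      rw [Finset.sum_congr rfl (fun i hi => hall (i+1) (by omega)
        (by simpa using Finset.mem_range.mp hi))]
      simp [mul_comm]
      ring
    have e2 : ∑ i ∈ Finset.range k, m (i + 1) ^ 2 = (k : ℤ) * (d - m 0) ^ 2 := by
      rw [Finset.sum_congr rfl (fun i hi => by
        rw [hall (i+1) (by omega) (by simpa using Finset.mem_range.mp hi)])]
      simp [mul_comm]
    rw [e1] at h1
    rw [e2] at h2
    have hkb : (k : ℤ) * (d - m 0) ^ 2 = (3 * (d - 1) - m 0) * (d - m 0) := by
      have : (k : ℤ) * (d - m 0) = 3 * (d - 1) - m 0 := by linarith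
      rw [sq, ← mul_assoc, this]
    rw [hkb] at h2
    linarith [h2, sq_nonneg (m 0)]
  constructor
  · exact key
  · intro hlt
    by_contra hcon
    push_neg at hcon
    have heq := key hcon
    have ht : 2 ≤ d - m 0 := by omega
    nlinarith [heq, mul_pos (by linarith : (0:ℤ) < 2 * (d - m 0) - 1)
      (by linarith : (0:ℤ) < d - m 0 - 1)]
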